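/- Let f₁, f₂ : ℝⁿ → ℝ be convex functions and f = f₁ − f₂. Suppose x̄ ∈ ℝⁿ is a local minimizer of f but not a global minimizer, ε̄ > 0, ξ̄₂ ∈ ∂_ε̄ f₂(x̄) and ξ̄₂ ∉ ∂_ε̄ f₁(x̄). Let ξ̄₁ ∈ ∂_ε̄ f₁(x̄) satisfy ‖ξ̄₁ − ξ̄₂‖ ≤ ‖ξ₁ − ξ̄₂‖ for all ξ₁ ∈ ∂_ε̄ f₁(x̄), and define f̂(y) = f₁(y) − (f₂(x̄) + ⟨ξ̄₂, y − x̄⟩ − ε̄). Then there exists ᾱ > 0 such that f̂(x̄ − ᾱ(ξ̄₁ − ξ̄₂)) − f̂(x̄) ≤ −ε̄ − (ᾱ/2)‖ξ̄₁ − ξ̄₂‖² and f(x̄ − ᾱ(ξ̄₁ − ξ̄₂)) − f(x̄) ≤ −(ᾱ/2)‖ξ̄₁ − ξ̄₂‖². -/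

import Mathlib

open scoped RealInnerProductSpace

/-- The ε-subdifferential of `g` at `x`. -/
def epsSubdiff {n : ℕ} (g : EuclideanSpace ℝ (Fin n) → ℝ) (ε : ℝ)
    (x : EuclideanSpace ℝ (Fin n)) : Set (EuclideanSpace ℝ (Fin n)) :=
  {ξ | ∀ y, g y ≥ g x + ⟪ξ, y - x⟫ - ε}

/-- The subdifferential of `g` at `x`. -/
def subdiff {n : ℕ} (g : EuclideanSpace ℝ (Fin n) → ℝ)
    (x : EuclideanSpace ℝ (Fin n)) : Set (EuclideanSpace ℝ (Fin n)) :=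
  {ξ | ∀ y, g y ≥ g x + ⟪ξ, y - x⟫}

/-- The t-spherical subdifferential of `g` at `x`. -/
def sphSubdiff {n : ℕ} (g : EuclideanSpace ℝ (Fin n) → ℝ) (t : ℝ)
    (x : EuclideanSpace ℝ (Fin n)) : Set (EuclideanSpace ℝ (Fin n)) :=
  convexHull ℝ {ξ | ∃ d : EuclideanSpace ℝ (Fin n), ‖d‖ = 1 ∧ ξ ∈ subdiff g (x + t • d)}

set_option maxHeartbeats 2000000 in
theorem descent_estimates_for_fhat {n : ℕ}
    (f₁ f₂ f : EuclideanSpace ℝ (Fin n) → ℝ)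
    (h₁ : ConvexOn ℝ Set.univ f₁) (h₂ : ConvexOn ℝ Set.univ f₂)
    (hf : ∀ x, f x = f₁ x - f₂ x)
    (xbar : EuclideanSpace ℝ (Fin n))
    (hloc : ∃ U : Set (EuclideanSpace ℝ (Fin n)),
      IsOpen U ∧ xbar ∈ U ∧ ∀ y ∈ U, f xbar ≤ f y)
    (hnotglob : ¬ (∀ y, f xbar ≤ f y))
    (εbar : ℝ) (hεbar : 0 < εbar)
    (ξbar₂ : EuclideanSpace ℝ (Fin n))
    (hξ₂ : ξbar₂ ∈ epsSubdiff f₂ εbar xbar)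
    (hξ₂' : ξbar₂ ∉ epsSubdiff f₁ εbar xbar)
    (ξbar₁ : EuclideanSpace ℝ (Fin n))
    (hξ₁ : ξbar₁ ∈ epsSubdiff f₁ εbar xbar)
    (hξ₁min : ∀ ξ₁ ∈ epsSubdiff f₁ εbar xbar, ‖ξbar₁ - ξbar₂‖ ≤ ‖ξ₁ - ξbar₂‖)
    (fhat : EuclideanSpace ℝ (Fin n) → ℝ)
    (hfhat : ∀ y, fhat y = f₁ y - (f₂ xbar + ⟪ξbar₂, y - xbar⟫ - εbar)) :
    ∃ αbar : ℝ, 0 < αbar ∧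
      fhat (xbar - αbar • (ξbar₁ - ξbar₂)) - fhat xbar ≤
        -εbar - (αbar / 2) * ‖ξbar₁ - ξbar₂‖ ^ 2 ∧
      f (xbar - αbar • (ξbar₁ - ξbar₂)) - f xbar ≤
        -(αbar / 2) * ‖ξbar₁ - ξbar₂‖ ^ 2 := by
  classical
  set g : EuclideanSpace ℝ (Fin n) := ξbar₁ - ξbar₂ with hgdef
  -- g ≠ 0
  have hgne : g ≠ 0 := by
    intro h
    apply hξ₂'
    have : ξbar₂ = ξbar₁ := by
      have := sub_eq_zero.mp h; exact this.symm
    rw [this]; exact hξ₁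
  have hgpos : 0 < ‖g‖ := norm_pos_iff.mpr hgne
  have hq : 0 < ‖g‖ ^ 2 := by positivity
  -- fhat xbar = f xbar + εbar
  have hfx : fhat xbar = f xbar + εbar := by
    rw [hfhat, hf]; simp; ring
  -- f ≤ fhat
  have hfle : ∀ y, f y ≤ fhat y := by
    intro y
    have h2 := hξ₂ y
    rw [hf, hfhat]
    linarith
  -- it suffices to prove the fhat inequality
  suffices h : ∃ α : ℝ, 0 < α ∧
      fhat (xbar - α • g) - fhat xbar ≤ -εbar - (α / 2) * ‖g‖ ^ 2 by
    obtain ⟨α, hα, hineq⟩ := h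
    refine ⟨α, hα, hineq, ?_⟩
    have := hfle (xbar - α • g)
    linarith
  by_contra hcon
  push_neg at hcon
  -- hcon : ∀ α, 0 < α → -εbar - α/2 * ‖g‖^2 < fhat (xbar - α•g) - fhat xbar
  -- fhat is convex
  have hfhatconv : ConvexOn ℝ Set.univ fhat := by
    refine ⟨convex_univ, fun x _ y _ a b ha hb hab => ?_⟩
    have h1 := h₁.2 (Set.mem_univ x) (Set.mem_univ y) ha hb hab
    simp only [smul_eq_mul] at h1 ⊢
    rw [hfhat, hfhat, hfhat, inner_sub_right, inner_sub_right, inner_sub_right,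
      inner_add_right, inner_smul_right, inner_smul_right]
    have ha' : a = 1 - b := by linarith
    subst ha'
    linarith [h1]
  -- fhat is continuous
  have hcont : Continuous fhat := by
    have hc1 : Continuous f₁ := by
      rw [← continuousOn_univ]
      exact h₁.continuousOn isOpen_univ
    have hfe : fhat = fun y => f₁ y - (f₂ xbar + ⟪ξbar₂, y - xbar⟫ - εbar) := funext hfhat
    rw [hfe]
    exact hc1.sub ((continuous_const.add ((continuous_const.inner
      (continuous_id.sub continuous_const)))).sub continuous_const)
  -- strict epigraph S and ray T
  set S : Set ((EuclideanSpace ℝ (Fin n)) × ℝ) := {p | fhat p.1 < p.2} with hSdef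
  set T : Set ((EuclideanSpace ℝ (Fin n)) × ℝ) :=
    (fun α : ℝ => (xbar - α • g, fhat xbar - εbar - α / 2 * ‖g‖ ^ 2)) '' (Set.Ici 0) with hTdef
  have hSopen : IsOpen S := isOpen_lt (hcont.comp continuous_fst) continuous_snd
  have hSconv : Convex ℝ S := by
    rintro ⟨x, rx⟩ hx ⟨y, ry⟩ hy a b ha hb hab
    simp only [hSdef, Set.mem_setOf_eq] at hx hy ⊢
    have hcomb := hfhatconv.2 (Set.mem_univ x) (Set.mem_univ y) ha hb hab
    simp only [smul_eq_mul] at hcomb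
    have : a * fhat x + b * fhat y < a * rx + b * ry := by
      rcases eq_or_lt_of_le ha with h0 | h0
      · have hb1 : b = 1 := by linarith
        rw [← h0, hb1]; simpa using hy
      · have h1 : a * fhat x < a * rx := by exact (mul_lt_mul_iff_right₀ h0).mpr hx
        have h2 : b * fhat y ≤ b * ry := mul_le_mul_of_nonneg_left hy.le hb
        linarith
    exact lt_of_le_of_lt hcomb this
  have hTconv : Convex ℝ T := by
    rintro p ⟨α₁, hα₁, rfl⟩ q ⟨α₂, hα₂, rfl⟩ a b ha hb hab
    refine ⟨a * α₁ + b * α₂, ?_, ?_⟩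
    · have : (0:ℝ) ≤ a * α₁ := mul_nonneg ha hα₁
      have : (0:ℝ) ≤ b * α₂ := mul_nonneg hb hα₂
      simp only [Set.mem_Ici]; positivity
    · have ha' : a = 1 - b := by linarith
      subst ha'
      dsimp only
      rw [Prod.smul_mk, Prod.smul_mk, Prod.mk_add_mk, Prod.mk.injEq]
      constructor
      · show xbar - ((1-b) * α₁ + b * α₂) • g
            = (1-b) • (xbar - α₁ • g) + b • (xbar - α₂ • g)
        module
      · show fhat xbar - εbar - ((1-b) * α₁ + b * α₂) / 2 * ‖g‖ ^ 2
            = (1-b) • (fhat xbar - εbar - α₁ / 2 * ‖g‖ ^ 2)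
            + b • (fhat xbar - εbar - α₂ / 2 * ‖g‖ ^ 2)
        simp only [smul_eq_mul]
        ring
  have hdisj : Disjoint S T := by
    rw [Set.disjoint_left]
    rintro p hp ⟨α, hα, rfl⟩
    simp only [hSdef, Set.mem_setOf_eq] at hp
    rcases eq_or_lt_of_le (Set.mem_Ici.mp hα) with h0 | h0
    · rw [← h0] at hp; simp at hp; linarith
    · have := hcon α h0
      linarith
  obtain ⟨F, u, hFS, hFT⟩ := geometric_hahn_banach_open hSconv hSopen hTconv hdisj
  set c : ℝ := F (0, 1) with hcdef
  have hF : ∀ (y : EuclideanSpace ℝ (Fin n)) (r : ℝ), F (y, r) = F (y, 0) + r * c := by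
    intro y r
    have he : ((y, r) : (EuclideanSpace ℝ (Fin n)) × ℝ)
        = (y, (0:ℝ)) + r • ((0 : EuclideanSpace ℝ (Fin n)), (1:ℝ)) := by
      simp [Prod.ext_iff]
    rw [he, map_add, map_smul, smul_eq_mul, hcdef]
  -- strict epigraph points
  have hS' : ∀ (y : EuclideanSpace ℝ (Fin n)) (t : ℝ), 0 < t →
      F (y, 0) + (fhat y + t) * c < u := by
    intro y t ht
    have : ((y, fhat y + t) : (EuclideanSpace ℝ (Fin n)) × ℝ) ∈ S := by
      simp only [hSdef, Set.mem_setOf_eq]; linarith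
    have := hFS _ this
    rwa [hF] at this
  -- ray points
  have hray : ∀ α : ℝ, 0 ≤ α →
      u ≤ F (xbar, 0) - α * F (g, 0) + (fhat xbar - εbar - α / 2 * ‖g‖ ^ 2) * c := by
    intro α hα
    have hmem : ((xbar - α • g, fhat xbar - εbar - α / 2 * ‖g‖ ^ 2) :
        (EuclideanSpace ℝ (Fin n)) × ℝ) ∈ T := ⟨α, hα, rfl⟩
    have h2 := hFT _ hmem
    rw [hF] at h2
    have he : ((xbar - α • g, (0:ℝ)) : (EuclideanSpace ℝ (Fin n)) × ℝ)
        = (xbar, (0:ℝ)) - α • (g, (0:ℝ)) := by simp [Prod.ext_iff]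
    rw [he, map_sub, map_smul, smul_eq_mul] at h2
    linarith
  -- c ≤ 0
  have hc_nonpos : c ≤ 0 := by
    by_contra hcpos
    push_neg at hcpos
    set t : ℝ := max 1 ((u - F (xbar, 0)) / c - fhat xbar) with htdef
    have ht0 : 0 < t := lt_of_lt_of_le one_pos (le_max_left _ _)
    have h2 := hS' xbar t ht0
    have ht2 : (u - F (xbar, 0)) / c - fhat xbar ≤ t := le_max_right _ _
    have h5 : (u - F (xbar, 0)) / c ≤ t + fhat xbar := by linarith
    have h6 : u - F (xbar, 0) ≤ (t + fhat xbar) * c := by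
      calc u - F (xbar, 0) = ((u - F (xbar, 0)) / c) * c := by field_simp
        _ ≤ (t + fhat xbar) * c := mul_le_mul_of_nonneg_right h5 hcpos.le
    nlinarith
  -- c ≠ 0
  have hc_ne : c ≠ 0 := by
    intro hc0
    have h2 := hS' xbar 1 one_pos
    have h3 := hray 0 le_rfl
    rw [hc0] at h2 h3
    simp at h2 h3
    linarith
  have hc : c < 0 := lt_of_le_of_ne hc_nonpos hc_ne
  have hcinv : 0 < (-1) / c := div_pos_of_neg_of_neg (by norm_num) hc
  -- (A): F(y,0) + fhat y * c ≤ u for all y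
  have hA : ∀ y, F (y, 0) + fhat y * c ≤ u := by
    intro y
    by_contra hy
    push_neg at hy
    set t : ℝ := (F (y, 0) + fhat y * c - u) / (-c) with htdef
    have ht0 : 0 < t := div_pos (by linarith) (by linarith)
    have h2 := hS' y t ht0
    have hnc : (-c) ≠ 0 := ne_of_gt (by linarith : (0:ℝ) < -c)
    have htc : t * c = -(F (y, 0) + fhat y * c - u) := by
      rw [htdef]; field_simp [hnc]
    nlinarith [htc]
  -- (D): α = 0 of ray
  have hD : u ≤ F (xbar, 0) + (fhat xbar - εbar) * c := by
    have := hray 0 le_rfl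
    simpa using this
  -- (C): F(g,0) ≤ -(‖g‖²/2) * c
  have hC : F (g, 0) ≤ -(‖g‖ ^ 2 / 2) * c := by
    by_contra hδ
    push_neg at hδ
    set δ : ℝ := F (g, 0) + ‖g‖ ^ 2 / 2 * c with hδdef
    have hδpos : 0 < δ := by rw [hδdef]; linarith
    set C₀ : ℝ := F (xbar, 0) + (fhat xbar - εbar) * c with hC₀def
    set α : ℝ := max 1 ((C₀ - u) / δ + 1) with hαdef
    have hα0 : (0:ℝ) ≤ α := le_trans zero_le_one (le_max_left _ _)
    have h2 := hray α hα0
    have h3 : α * δ ≤ C₀ - u := by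
      rw [hδdef, hC₀def]; nlinarith [h2]
    have h4 : (C₀ - u) / δ + 1 ≤ α := le_max_right _ _
    have h5 : (C₀ - u) + δ ≤ α * δ := by
      have := mul_le_mul_of_nonneg_right h4 hδpos.le
      calc (C₀ - u) + δ = ((C₀ - u) / δ + 1) * δ := by field_simp
        _ ≤ α * δ := this
    linarith
  -- define ξ via Riesz representation
  set ξ : EuclideanSpace ℝ (Fin n) :=
    ((-1) / c) • ((InnerProductSpace.toDual ℝ _).symm (F.comp (ContinuousLinearMap.inl ℝ _ ℝ)))
    with hξdef
  have hξinner : ∀ y, ⟪ξ, y⟫ = ((-1) / c) * F (y, 0) := by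
    intro y
    rw [hξdef, real_inner_smul_left, InnerProductSpace.toDual_symm_apply]
    rfl
  -- ξ + ξbar₂ ∈ ∂_ε f₁(x̄)
  have hξmem : ξ + ξbar₂ ∈ epsSubdiff f₁ εbar xbar := by
    intro y
    have hAy := hA y
    -- fhat y ≥ fhat xbar + ⟪ξ, y - xbar⟫ - εbar
    have key : fhat y ≥ fhat xbar + ⟪ξ, y - xbar⟫ - εbar := by
      rw [inner_sub_right, hξinner, hξinner]
      have hsub : F (y, 0) - F (xbar, 0) ≤ (-c) * (fhat y - fhat xbar + εbar) := by
        nlinarith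
      have := mul_le_mul_of_nonneg_left hsub hcinv.le
      have heq : ((-1) / c) * ((-c) * (fhat y - fhat xbar + εbar))
          = fhat y - fhat xbar + εbar := by field_simp
      rw [heq] at this
      linarith [this]
    rw [hfhat y, hfhat xbar] at key
    simp only [sub_self, inner_zero_right] at key
    rw [inner_add_left]
    linarith [key]
  -- ⟪ξ, g⟫ ≤ ‖g‖²/2
  have hξg : ⟪ξ, g⟫ ≤ ‖g‖ ^ 2 / 2 := by
    rw [hξinner]
    have := mul_le_mul_of_nonneg_left hC hcinv.le
    have heq : ((-1) / c) * (-(‖g‖ ^ 2 / 2) * c) = ‖g‖ ^ 2 / 2 := by field_simp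
    rw [heq] at this
    exact this
  -- projection inequality: ⟪g, ξ⟫ ≥ ‖g‖²
  have hproj : ‖g‖ ^ 2 ≤ ⟪g, ξ⟫ := by
    -- for t ∈ (0,1], the convex combination is in the subdifferential
    have hcomb : ∀ t : ℝ, 0 ≤ t → t ≤ 1 → 0 ≤ 2 * t * ⟪g, ξ - g⟫ + t ^ 2 * ‖ξ - g‖ ^ 2 := by
      intro t ht0 ht1
      have hmem : (1 - t) • ξbar₁ + t • (ξ + ξbar₂) ∈ epsSubdiff f₁ εbar xbar := by
        intro y
        have e1 := hξ₁ y
        have e2 := hξmem y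
        rw [inner_add_left, real_inner_smul_left, real_inner_smul_left]
        nlinarith [e1, e2]
      have hnorm := hξ₁min _ hmem
      have heq : (1 - t) • ξbar₁ + t • (ξ + ξbar₂) - ξbar₂ = g + t • (ξ - g) := by
        rw [hgdef]; module
      rw [heq] at hnorm
      have hsq : ‖g‖ ^ 2 ≤ ‖g + t • (ξ - g)‖ ^ 2 := by
        have h1 : (0:ℝ) ≤ ‖g‖ := norm_nonneg _
        nlinarith [hnorm, norm_nonneg (g + t • (ξ - g))]
      have hexp : ‖g + t • (ξ - g)‖ ^ 2
          = ‖g‖ ^ 2 + 2 * (t * ⟪g, ξ - g⟫) + t ^ 2 * ‖ξ - g‖ ^ 2 := by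
        rw [@norm_add_sq_real, real_inner_smul_right, norm_smul]
        rw [mul_pow]
        simp [abs_of_nonneg ht0]
        try ring
      rw [hexp] at hsq
      linarith
    have ha : 0 ≤ ⟪g, ξ - g⟫ := by
      by_contra hneg
      push_neg at hneg
      set a : ℝ := ⟪g, ξ - g⟫ with hadef
      set b : ℝ := ‖ξ - g‖ ^ 2 with hbdef
      have hb0 : 0 ≤ b := by positivity
      rcases eq_or_lt_of_le hb0 with hb | hb
      · have := hcomb 1 zero_le_one le_rfl
        rw [← hb] at this
        nlinarith
      · set t : ℝ := min 1 ((-a) / b) with htdef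
        have ht0 : 0 < t := lt_min one_pos (div_pos (by linarith) hb)
        have ht1 : t ≤ 1 := min_le_left _ _
        have htb : t * b ≤ -a := by
          have h4 : t ≤ (-a) / b := min_le_right _ _
          calc t * b ≤ ((-a) / b) * b := mul_le_mul_of_nonneg_right h4 hb0
            _ = -a := by field_simp
        have := hcomb t ht0.le ht1
        nlinarith
    have : ⟪g, ξ - g⟫ = ⟪g, ξ⟫ - ‖g‖ ^ 2 := by
      rw [inner_sub_right, real_inner_self_eq_norm_sq]
    linarith
  rw [real_inner_comm] at hproj
  linarith
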